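/- Every Eulerian circuit in the astute graph G_{k−1,n} induces a (k,n)-perfect necklace: reading off, along the circuit, the last symbol of the first coordinate of each node visited produces a cyclic word of length n·b^{k−1}·b = n·b^k that is (k,n)-perfect, and conversely every (k,n)-perfect necklace arises from some Eulerian circuit in G_{k−1,n}. -/

import Mathlib

/-- `w` (a word of length `k`) occurs at position `i` in the cyclic word given by
the first `L` symbols of `s`. -/
def OccursAt {A : Type*} {k : ℕ} (s : ℕ → A) (L : ℕ) (w : Fin k → A) (i : ℕ) : Prop :=
  ∀ j : Fin k, s ((i + (j : ℕ)) % L) = w j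

/-- The cyclic word given by the first `n * |A| ^ k` values of `s` is a
`(k,n)`-perfect necklace: every word of length `k` occurs exactly `n` times, and
the occurrence positions are pairwise distinct modulo `n`. -/
def IsPerfectNecklace {A : Type*} [Fintype A] (k n : ℕ) (s : ℕ → A) : Prop :=
  ∀ w : Fin k → A,
    Nat.card {i : ℕ // i < n * Fintype.card A ^ k ∧
      OccursAt s (n * Fintype.card A ^ k) w i} = n ∧
    ∀ i i' : ℕ, i < n * Fintype.card A ^ k → i' < n * Fintype.card A ^ k →
      OccursAt s (n * Fintype.card A ^ k) w i →
      OccursAt s (n * Fintype.card A ^ k) w i' →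
      i % n = i' % n → i = i'

/-- The target of the edge of the astute graph `G_{s,n}` leaving the node `p`
with label `a`: the word of `p` is shifted one place (dropping its first symbol
and appending `a`) and the counter is increased by one modulo `n`. -/
def astuteStep (b s n : ℕ) (p : (Fin s → Fin b) × ZMod n) (a : Fin b) :
    (Fin s → Fin b) × ZMod n :=
  (fun i => if h : (i : ℕ) + 1 < s then p.1 ⟨(i : ℕ) + 1, h⟩ else a, p.2 + 1)

/-- An Eulerian circuit in the astute graph `G_{k−1,n}` (edges are pairs
`(node, label)`, and there are `n·b^k` of them), presented as a cyclically
indexed sequence of edges: consecutive edges are incident, and every edge is used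
exactly once per period. -/
def IsEulerianCircuit (b k n : ℕ)
    (c : ℕ → ((Fin (k - 1) → Fin b) × ZMod n) × Fin b) : Prop :=
  (∀ i : ℕ, (c ((i + 1) % (n * b ^ k))).1 =
      astuteStep b (k - 1) n (c (i % (n * b ^ k))).1 (c (i % (n * b ^ k))).2) ∧
  (∀ e : ((Fin (k - 1) → Fin b) × ZMod n) × Fin b, ∃! i : ℕ, i < n * b ^ k ∧ c i = e)

section Helpers

private lemma modmod' {L : ℕ} (a : ℕ) : a % L % L = a % L :=
  Nat.mod_mod_of_dvd a dvd_rfl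

private lemma mod3' {L : ℕ} (a s t : ℕ) : (a % L + s + t) % L = (a + s + t) % L := by
  rw [Nat.add_assoc, Nat.mod_add_mod, ← Nat.add_assoc]

private lemma mod_inj' {L i i' a : ℕ} (hi : i < L) (hi' : i' < L)
    (h : (i + a) % L = (i' + a) % L) : i = i' := by
  have h2 : i % L = i' % L := Nat.ModEq.add_right_cancel' a h
  rwa [Nat.mod_eq_of_lt hi, Nat.mod_eq_of_lt hi'] at h2

end Helpers


/-- Eulerian circuits in the astute graph `G_{k−1,n}` correspond to `(k,n)`-perfect
necklaces: reading off the edge labels (the new last symbol of the word of each node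
visited) along an Eulerian circuit produces a `(k,n)`-perfect cyclic word of length
`n·b^k`, and conversely every `(k,n)`-perfect necklace arises this way. -/
theorem eulerian_iff_perfect (b k n : ℕ) (hb : 2 ≤ b) (hk : 1 ≤ k) [NeZero n] :
    (∀ c : ℕ → ((Fin (k - 1) → Fin b) × ZMod n) × Fin b,
      IsEulerianCircuit b k n c →
        IsPerfectNecklace k n (fun i => (c (i % (n * b ^ k))).2)) ∧
    (∀ x : ℕ → Fin b, IsPerfectNecklace k n x →
      ∃ c : ℕ → ((Fin (k - 1) → Fin b) × ZMod n) × Fin b,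
        IsEulerianCircuit b k n c ∧ ∀ i < n * b ^ k, x i = (c i).2) := by
  have hn : 0 < n := Nat.pos_of_ne_zero (NeZero.ne n)
  set L := n * b ^ k with hLdef
  have hL : 0 < L := Nat.mul_pos hn (Nat.pow_pos (by omega))
  have hkL : k - 1 ≤ L := by
    have h1 : k < 2 ^ k := Nat.lt_two_pow_self
    have h2 : 2 ^ k ≤ b ^ k := Nat.pow_le_pow_left hb k
    have h3 : b ^ k ≤ n * b ^ k := Nat.le_mul_of_pos_left _ hn
    omega
  have hkk : k - 1 < k := by omega
  have hcast : ∀ j : ℕ, ((j % L : ℕ) : ZMod n) = (j : ZMod n) := by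
    intro j
    rw [ZMod.natCast_eq_natCast_iff']
    exact Nat.mod_mod_of_dvd j ⟨b ^ k, rfl⟩
  constructor
  · -- forward direction
    intro c hc
    obtain ⟨h1, h2⟩ := hc
    rw [← hLdef] at h1 h2
    have hword : ∀ (i : ℕ) (j : Fin (k - 1)), (c ((i + 1) % L)).1.1 j =
        if h : (j : ℕ) + 1 < k - 1 then (c (i % L)).1.1 ⟨(j : ℕ) + 1, h⟩
        else (c (i % L)).2 := by
      intro i j
      exact congrArg (fun q => q.1 j) (h1 i)
    have hcnt : ∀ i : ℕ, (c ((i + 1) % L)).1.2 = (c (i % L)).1.2 + 1 := by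
      intro i
      exact congrArg Prod.snd (h1 i)
    have hA : ∀ (d i m : ℕ) (hm : m < k - 1), m + d = k - 1 →
        (c ((i + d) % L)).1.1 ⟨m, hm⟩ = (c (i % L)).2 := by
      intro d
      induction d with
      | zero => intro i m hm he; omega
      | succ d ih =>
        intro i m hm he
        have h' : i + (d + 1) = (i + d) + 1 := by omega
        rw [h', hword (i + d) ⟨m, hm⟩]
        rcases Nat.eq_zero_or_pos d with hd | hd
        · subst hd
          have hne : ¬ (m + 1 < k - 1) := by omega
          rw [dif_neg hne, Nat.add_zero]
        · have hlt : m + 1 < k - 1 := by omega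
          rw [dif_pos hlt]
          exact ih i (m + 1) hlt (by omega)
    have hC : ∀ i : ℕ, (c (i % L)).1.2 = (c 0).1.2 + (i : ZMod n) := by
      intro i
      induction i with
      | zero => simp
      | succ i ih =>
        rw [hcnt i, ih]
        push_cast
        ring
    have hB : ∀ (i : ℕ) (w : Fin k → Fin b),
        OccursAt (fun t => (c (t % L)).2) L w i ↔
          ((∀ (j : ℕ) (hj : j < k - 1),
              (c ((i + (k - 1)) % L)).1.1 ⟨j, hj⟩ = w ⟨j, by omega⟩) ∧
            (c ((i + (k - 1)) % L)).2 = w ⟨k - 1, hkk⟩) := by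
      intro i w
      constructor
      · intro ho
        constructor
        · intro j hj
          have hoj := ho ⟨j, by omega⟩
          simp only [Nat.mod_mod_of_dvd _ dvd_rfl] at hoj
          have h' := hA (k - 1 - j) (i + j) j hj (by omega)
          have he : i + j + (k - 1 - j) = i + (k - 1) := by omega
          rw [he] at h'
          exact h'.trans hoj
        · have hoj := ho ⟨k - 1, hkk⟩
          simp only [Nat.mod_mod_of_dvd _ dvd_rfl] at hoj
          exact hoj
      · rintro ⟨hw, hlast⟩ j
        simp only [Nat.mod_mod_of_dvd _ dvd_rfl]
        rcases lt_or_ge (j : ℕ) (k - 1) with hj | hj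
        · have h' := hA (k - 1 - (j : ℕ)) (i + (j : ℕ)) (j : ℕ) hj (by omega)
          have he : i + (j : ℕ) + (k - 1 - (j : ℕ)) = i + (k - 1) := by omega
          rw [he] at h'
          rw [← h', hw (j : ℕ) hj]
        · have hje : (j : ℕ) = k - 1 := by omega
          have he : i + (j : ℕ) = i + (k - 1) := by omega
          rw [he, hlast]
          exact congrArg w (Fin.ext hje.symm)
    -- edge determined by an occurrence
    intro w
    simp only [Fintype.card_fin]
    rw [← hLdef]
    have hcc : ∀ i0 : ℕ, OccursAt (fun t => (c (t % L)).2) L w i0 →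
        c ((i0 + (k - 1)) % L) =
          ((fun m : Fin (k - 1) => w ⟨(m : ℕ), m.isLt.trans hkk⟩,
            (c ((i0 + (k - 1)) % L)).1.2), w ⟨k - 1, hkk⟩) := by
      intro i0 ho
      obtain ⟨hw', hl'⟩ := (hB i0 w).1 ho
      refine Prod.ext (Prod.ext (funext fun m => ?_) rfl) hl'
      exact hw' (m : ℕ) m.isLt
    have hinj : ∀ i i' : ℕ, i < L → i' < L →
        c ((i + (k - 1)) % L) = c ((i' + (k - 1)) % L) → i = i' := by
      intro i i' hi hi' he
      obtain ⟨j, hj, hju⟩ := h2 (c ((i + (k - 1)) % L))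
      have e1 := hju _ ⟨Nat.mod_lt _ hL, rfl⟩
      have e2 := hju _ ⟨Nat.mod_lt _ hL, he.symm⟩
      exact mod_inj' hi hi' (e1.trans e2.symm)
    constructor
    · -- count equals n
      have key : Function.Bijective
          (fun i : {i : ℕ // i < L ∧ OccursAt (fun t => (c (t % L)).2) L w i} =>
            (c (((i : ℕ) + (k - 1)) % L)).1.2) := by
        constructor
        · rintro ⟨i, hi, hoi⟩ ⟨i', hi', hoi'⟩ hvv
          simp only at hvv
          refine Subtype.ext (hinj i i' hi hi' ?_)
          rw [hcc i hoi, hcc i' hoi', hvv]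
        · intro v
          obtain ⟨i0, ⟨hi0L, hi0⟩, -⟩ :=
            h2 ((fun m : Fin (k - 1) => w ⟨(m : ℕ), m.isLt.trans hkk⟩, v), w ⟨k - 1, hkk⟩)
          have hidx : ((i0 + (L - (k - 1))) % L + (k - 1)) % L = i0 := by
            rw [Nat.mod_add_mod]
            have he : i0 + (L - (k - 1)) + (k - 1) = i0 + L := by omega
            rw [he, Nat.add_mod_right, Nat.mod_eq_of_lt hi0L]
          have hocc : OccursAt (fun t => (c (t % L)).2) L w ((i0 + (L - (k - 1))) % L) := by
            rw [hB]
            refine ⟨fun j hj => ?_, ?_⟩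
            · rw [hidx, hi0]
            · rw [hidx, hi0]
          refine ⟨⟨(i0 + (L - (k - 1))) % L, Nat.mod_lt _ hL, hocc⟩, ?_⟩
          simp only
          rw [hidx, hi0]
      rw [Nat.card_congr (Equiv.ofBijective _ key), Nat.card_zmod]
    · -- distinctness mod n
      intro i i' hiL hi'L ho ho' hmod
      refine hinj i i' hiL hi'L ?_
      rw [hcc i ho, hcc i' ho']
      have hv : (c ((i + (k - 1)) % L)).1.2 = (c ((i' + (k - 1)) % L)).1.2 := by
        rw [hC (i + (k - 1)), hC (i' + (k - 1))]
        have : ((i : ℕ) : ZMod n) = ((i' : ℕ) : ZMod n) := by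
          rw [ZMod.natCast_eq_natCast_iff']
          exact hmod
        push_cast
        rw [this]
      rw [hv]
  · -- converse direction
    intro x hx
    unfold IsPerfectNecklace at hx
    simp only [Fintype.card_fin] at hx
    rw [← hLdef] at hx
    refine ⟨fun i =>
      ((fun m : Fin (k - 1) => x ((i % L + (m : ℕ) + (L - (k - 1))) % L),
        ((i : ℕ) : ZMod n)), x (i % L)), ⟨?_, ?_⟩, ?_⟩
    · -- step condition
      intro i
      refine Prod.ext (funext fun j => ?_) ?_
      · simp only [astuteStep, ← hLdef]
        by_cases hj1 : (j : ℕ) + 1 < k - 1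
        · rw [dif_pos hj1]
          simp only [mod3']
          congr 2
          omega
        · rw [dif_neg hj1]
          simp only [mod3', modmod']
          have he : i + 1 + (j : ℕ) + (L - (k - 1)) = i + L := by omega
          rw [he, Nat.add_mod_right]
      · simp only [astuteStep, ← hLdef]
        rw [hcast (i + 1), hcast i]
        push_cast
        ring
    · -- every edge exactly once
      rintro ⟨⟨u, v⟩, a⟩
      set w : Fin k → Fin b :=
        fun j => if h : (j : ℕ) < k - 1 then u ⟨(j : ℕ), h⟩ else a with hwdef
      have hwlt : ∀ (j : Fin k) (h : (j : ℕ) < k - 1), w j = u ⟨(j : ℕ), h⟩ :=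
        fun j h => dif_pos h
      have hwge : ∀ (j : Fin k), ¬ ((j : ℕ) < k - 1) → w j = a :=
        fun j h => dif_neg h
      obtain ⟨hcard, hdist⟩ := hx w
      have hbij : Function.Bijective
          (fun i : {i : ℕ // i < L ∧ OccursAt x L w i} => ((i : ℕ) : ZMod n)) := by
        rw [Nat.bijective_iff_injective_and_card]
        refine ⟨?_, by rw [hcard, Nat.card_zmod]⟩
        rintro ⟨i, hiL, hoi⟩ ⟨i', hi'L, hoi'⟩ hii
        simp only at hii
        exact Subtype.ext
          (hdist i i' hiL hi'L hoi hoi' ((ZMod.natCast_eq_natCast_iff' _ _ _).1 hii))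
      obtain ⟨⟨i', hi'L, hoi'⟩, hii'⟩ := hbij.2 (v - ((k - 1 : ℕ) : ZMod n))
      simp only at hii'
      -- candidate index
      have hIL : (i' + (k - 1)) % L < L := Nat.mod_lt _ hL
      have hedge : ∀ i1 : ℕ, i1 < L →
          ((fun m : Fin (k - 1) => x ((i1 % L + (m : ℕ) + (L - (k - 1))) % L),
            ((i1 : ℕ) : ZMod n)), x (i1 % L)) = ((u, v), a) →
          i1 = (i' + (k - 1)) % L := by
        intro i1 hi1 he
        have hw1 : (fun m : Fin (k - 1) => x ((i1 % L + (m : ℕ) + (L - (k - 1))) % L)) = u :=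
          congrArg (fun p => p.1.1) he
        have hv1 : ((i1 : ℕ) : ZMod n) = v := congrArg (fun p => p.1.2) he
        have ha1 : x (i1 % L) = a := congrArg (fun p => p.2) he
        rw [Nat.mod_eq_of_lt hi1] at ha1
        set p := (i1 + (L - (k - 1))) % L with hpdef
        have hop : OccursAt x L w p := by
          intro j
          rw [hpdef, Nat.mod_add_mod]
          rcases lt_or_ge (j : ℕ) (k - 1) with hj | hj
          · rw [hwlt j hj]
            have hthis := congrFun hw1 ⟨(j : ℕ), hj⟩
            simp only [Nat.mod_eq_of_lt hi1] at hthis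
            have he2 : i1 + (L - (k - 1)) + (j : ℕ) = i1 + (j : ℕ) + (L - (k - 1)) := by omega
            rw [he2]
            exact hthis
          · rw [hwge j (by omega)]
            have he2 : i1 + (L - (k - 1)) + (j : ℕ) = i1 + L := by omega
            rw [he2, Nat.add_mod_right, Nat.mod_eq_of_lt hi1]
            exact ha1
        have hpmod : ((p : ℕ) : ZMod n) = v - ((k - 1 : ℕ) : ZMod n) := by
          rw [hpdef, hcast]
          push_cast [Nat.cast_sub hkL]
          have hLz : ((L : ℕ) : ZMod n) = 0 := by
            rw [hLdef]
            push_cast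
            rw [ZMod.natCast_self]
            ring
          rw [hv1, hLz]
          ring
        have hpi' : p = i' := by
          refine hdist p i' (Nat.mod_lt _ hL) hi'L hop hoi' ?_
          rw [← ZMod.natCast_eq_natCast_iff']
          rw [hpmod, hii']
        have : (p + (k - 1)) % L = i1 := by
          rw [hpdef, Nat.mod_add_mod]
          have he2 : i1 + (L - (k - 1)) + (k - 1) = i1 + L := by omega
          rw [he2, Nat.add_mod_right, Nat.mod_eq_of_lt hi1]
        rw [← this, hpi']
      refine ⟨(i' + (k - 1)) % L, ⟨hIL, ?_⟩, fun i1 hi1 => hedge i1 hi1.1 hi1.2⟩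
      -- the candidate is indeed the edge
      refine Prod.ext (Prod.ext (funext fun m => ?_) ?_) ?_
      · simp only [mod3']
        have he2 : i' + (k - 1) + (m : ℕ) + (L - (k - 1)) = i' + (m : ℕ) + L := by omega
        rw [he2, Nat.add_mod_right]
        have hthis := hoi' ⟨(m : ℕ), m.isLt.trans hkk⟩
        rw [hwlt _ m.isLt] at hthis
        exact hthis
      · simp only
        rw [hcast]
        push_cast
        rw [hii']
        ring
      · simp only [modmod']
        have hthis := hoi' ⟨k - 1, hkk⟩
        rw [hwge _ (lt_irrefl (k - 1))] at hthis
        exact hthis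
    · intro i hi
      simp only [Nat.mod_eq_of_lt hi]
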